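/- For g = sl_{n+1}(ℂ): (1) if c is an ad-nilpotent ideal with generator set Γ(c) = {(i₁,j₁),…,(i_k,j_k)}, then n_g(c) = p({i₁,…,i_k} ∪ {j₁−1,…,j_k−1}); (2) for a subset E ⊆ [n], the ideals c with n_g(c) = p(E) are in bijection with pairs of integer sequences 1 ≤ a₁ < … < a_k ≤ n, 1 ≤ b₁ < … < b_k ≤ n (k not fixed) such that a_i ≤ b_i for all i and {a₁,…,a_k} ∪ {b₁,…,b_k} = E, the ideal corresponding to such a pair having generators {(a_i, b_i+1) : 1 ≤ i ≤ k}; (3) if #E = s, then the number of ad-nilpotent ideals c with n_g(c) = p(E) equals M_s, the s-th Motzkin number; in particular it depends only on s = n − srk p(E). -/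

import Mathlib

open scoped Classical

noncomputable section

namespace SLModel

/-!
Combinatorial model for `g = sl_{n+1}(ℂ)` with the upper-triangular Borel `b` and
diagonal Cartan `t`: positive roots are identified with pairs `(i,j)`,
`1 ≤ i < j ≤ n+1`, with simple roots `α_i = (i, i+1)` and
`(i,j) = α_i + ⋯ + α_{j-1}`.  Ad-nilpotent ideals of `b` (ideals of `b` contained
in `u = [b,b]`) correspond bijectively to upper ideals of this root poset, where
`(i,j) ≼ (i',j')` iff `i' ≤ i` and `j ≤ j'`.
-/

/-- `(i,j)` is a positive root of `sl_{n+1}`. -/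
def IsPosRoot (n : ℕ) (p : ℕ × ℕ) : Prop := 1 ≤ p.1 ∧ p.1 < p.2 ∧ p.2 ≤ n + 1

/-- `I` is an upper ideal of the root poset of `sl_{n+1}`, i.e. the root set of an
ad-nilpotent ideal `c` of `b`. -/
def IsUpperIdeal (n : ℕ) (I : Finset (ℕ × ℕ)) : Prop :=
  (∀ p ∈ I, IsPosRoot n p) ∧
  ∀ p ∈ I, ∀ q : ℕ × ℕ, IsPosRoot n q → q.1 ≤ p.1 → p.2 ≤ q.2 → q ∈ I

/-- The condition `g_{-α_l} ⊆ n_g(c)` for the ad-nilpotent ideal `c` with root set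
`I`.  Since `[g_{-α_l}, g_{(i,j)}] = g_{(i,j) - α_l}` when `(i,j) - α_l` is a root
(namely `(i+1,j)` if `l = i < j - 1`, and `(i,j-1)` if `l = j-1 > i`),
`[g_{-α_l}, g_{α_l}] ⊆ t`, and `0` otherwise, the root space `g_{-α_l}` normalizes
`c` iff `(l,l+1) ∉ I` and `I` is closed under subtracting `α_l`. -/
def NegSimpleInNormalizer (I : Finset (ℕ × ℕ)) (l : ℕ) : Prop :=
  (l, l + 1) ∉ I ∧
  (∀ p ∈ I, p.1 = l → l + 1 < p.2 → (l + 1, p.2) ∈ I) ∧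
  (∀ p ∈ I, p.2 = l + 1 → p.1 < l → (p.1, l) ∈ I)

/-- `n_g(c) = p(E)`, where for `E ⊆ [n]` the standard parabolic `p(E)` is the one
whose standard Levi omits exactly the simple roots `α_l`, `l ∈ E`; thus
`g_{-α_l} ⊆ p(E)` iff `l ∉ E`. -/
def NormalizerEq (n : ℕ) (I : Finset (ℕ × ℕ)) (E : Finset ℕ) : Prop :=
  ∀ l, 1 ≤ l → l ≤ n → (NegSimpleInNormalizer I l ↔ l ∉ E)

/-- `n_g(c) = b`, i.e. no negative simple root space normalizes `c`. -/
def NormalizerIsBorel (n : ℕ) (I : Finset (ℕ × ℕ)) : Prop :=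
  ∀ l, 1 ≤ l → l ≤ n → ¬ NegSimpleInNormalizer I l

/-- `c` is strictly positive: `c ⊆ [u,u]`, i.e. `I` contains no simple root. -/
def IsStrictlyPositive (I : Finset (ℕ × ℕ)) : Prop := ∀ l : ℕ, (l, l + 1) ∉ I

/-- `p` is a generator of the ideal with root set `I`: a minimal element of `I`. -/
def IsGenerator (I : Finset (ℕ × ℕ)) (p : ℕ × ℕ) : Prop :=
  p ∈ I ∧ ∀ q ∈ I, p.1 ≤ q.1 → q.2 ≤ p.2 → q = p

/-- The `s`-th Motzkin number `M_s = Σ_r binom(s, 2r) C_r`. -/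
def motzkin (s : ℕ) : ℕ := ∑ r ∈ Finset.range (s + 1), s.choose (2 * r) * catalan r

/-- The upper ideal generated by a finite set `G` of positive roots (all pairs
`(x,y)` lying above some element of `G`). -/
def upperClosure' (n : ℕ) (G : Finset (ℕ × ℕ)) : Finset (ℕ × ℕ) :=
  ((Finset.Icc 1 (n + 1)) ×ˢ (Finset.Icc 1 (n + 1))).filter
    fun p => p.1 < p.2 ∧ ∃ q ∈ G, p.1 ≤ q.1 ∧ q.2 ≤ p.2

/-- A pair of integer sequences `1 ≤ a₁ < ⋯ < a_k ≤ n`, `1 ≤ b₁ < ⋯ < b_k ≤ n`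
with `a_i ≤ b_i` and `{a₁,…,a_k} ∪ {b₁,…,b_k} = E` (the length `k` is not fixed). -/
def GoodPair (n : ℕ) (E : Finset ℕ)
    (s : (k : ℕ) × ((Fin k → ℕ) × (Fin k → ℕ))) : Prop :=
  StrictMono s.2.1 ∧ StrictMono s.2.2 ∧
  (∀ i, 1 ≤ s.2.1 i ∧ s.2.1 i ≤ n) ∧ (∀ i, 1 ≤ s.2.2 i ∧ s.2.2 i ≤ n) ∧
  (∀ i, s.2.1 i ≤ s.2.2 i) ∧
  Finset.image s.2.1 Finset.univ ∪ Finset.image s.2.2 Finset.univ = E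

/-- The ideal with generators `{(a_i, b_i + 1) : 1 ≤ i ≤ k}` associated to a pair
of sequences `(a, b)`. -/
def idealOfPair (n : ℕ) (s : (k : ℕ) × ((Fin k → ℕ) × (Fin k → ℕ))) :
    Finset (ℕ × ℕ) :=
  upperClosure' n (Finset.image (fun i => (s.2.1 i, s.2.2 i + 1)) Finset.univ)


/-! ### Auxiliary machinery -/

section Aux

open Finset

/-- The `i`-th smallest element of a finite set of naturals. -/
def nth (A : Finset ℕ) (i : ℕ) : ℕ := (A.sort (· ≤ ·)).getD i 0

lemma nth_eq_get (A : Finset ℕ) {i : ℕ} (h : i < A.card) :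
    nth A i = (A.sort (· ≤ ·))[i]'(by rwa [Finset.length_sort]) :=
  List.getD_eq_getElem _ _ _

lemma nth_mem {A : Finset ℕ} {i : ℕ} (h : i < A.card) : nth A i ∈ A := by
  rw [nth_eq_get A h, ← Finset.mem_sort (α := ℕ) (· ≤ ·)]
  exact List.getElem_mem _

lemma nth_lt_nth {A : Finset ℕ} {i j : ℕ} (hij : i < j) (hj : j < A.card) :
    nth A i < nth A j := by
  rw [nth_eq_get A (hij.trans hj), nth_eq_get A hj]
  exact A.sortedLT_sort.getElem_lt_getElem_of_lt hij

lemma nth_le_nth {A : Finset ℕ} {i j : ℕ} (hij : i ≤ j) (hj : j < A.card) :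
    nth A i ≤ nth A j := by
  rcases hij.lt_or_eq with h | h
  · exact (nth_lt_nth h hj).le
  · rw [h]

lemma nth_exists {A : Finset ℕ} {x : ℕ} (hx : x ∈ A) :
    ∃ i, i < A.card ∧ nth A i = x := by
  rw [← Finset.mem_sort (α := ℕ) (· ≤ ·)] at hx
  obtain ⟨i, hi, hix⟩ := List.mem_iff_getElem.1 hx
  have hi' : i < A.card := by rwa [Finset.length_sort] at hi
  exact ⟨i, hi', by rw [nth_eq_get A hi']; exact hix⟩

lemma nth_le_iff_card {A : Finset ℕ} {i t : ℕ} (h : i < A.card) :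
    nth A i ≤ t ↔ i + 1 ≤ (A.filter (· ≤ t)).card := by
  constructor
  · intro hle
    have hsub : (Finset.range (i + 1)).image (nth A) ⊆ A.filter (· ≤ t) := by
      intro x hx
      simp only [Finset.mem_image, Finset.mem_range] at hx
      obtain ⟨j, hj, rfl⟩ := hx
      have hj' : j < A.card := by omega
      exact Finset.mem_filter.2 ⟨nth_mem hj', le_trans (nth_le_nth (by omega) h) hle⟩
    have hinj : Set.InjOn (nth A) (Finset.range (i + 1)) := by
      intro x hx y hy hxy
      simp only [Finset.coe_range, Set.mem_Iio] at hx hy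
      rcases lt_trichotomy x y with hlt | he | hlt
      · exact absurd hxy (nth_lt_nth hlt (by omega)).ne
      · exact he
      · exact absurd hxy.symm (nth_lt_nth hlt (by omega)).ne
    calc i + 1 = ((Finset.range (i + 1)).image (nth A)).card := by
          rw [Finset.card_image_of_injOn hinj, Finset.card_range]
      _ ≤ (A.filter (· ≤ t)).card := Finset.card_le_card hsub
  · intro hc
    by_contra hlt
    push_neg at hlt
    have hsub : A.filter (· ≤ t) ⊆ (Finset.range i).image (nth A) := by
      intro x hx
      rw [Finset.mem_filter] at hx
      obtain ⟨j, hj, rfl⟩ := nth_exists hx.1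
      have hji : j < i := by
        by_contra hji
        push_neg at hji
        have := nth_le_nth hji hj
        omega
      exact Finset.mem_image.2 ⟨j, Finset.mem_range.2 hji, rfl⟩
    have h1 := Finset.card_le_card hsub
    have h2 := Finset.card_image_le (f := nth A) (s := Finset.range i)
    rw [Finset.card_range] at h2
    omega

lemma nth_strictMono {A : Finset ℕ} {k : ℕ} (hA : A.card = k) :
    StrictMono (fun i : Fin k => nth A i) := by
  intro i j hij
  exact nth_lt_nth hij (by omega)

lemma nth_image_univ {A : Finset ℕ} {k : ℕ} (hA : A.card = k) :
    Finset.image (fun i : Fin k => nth A i) Finset.univ = A := by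
  apply Finset.Subset.antisymm
  · intro x hx
    simp only [Finset.mem_image, Finset.mem_univ, true_and] at hx
    obtain ⟨i, rfl⟩ := hx
    exact nth_mem (by omega)
  · intro x hx
    obtain ⟨i, hi, rfl⟩ := nth_exists hx
    exact Finset.mem_image.2 ⟨⟨i, by omega⟩, Finset.mem_univ _, rfl⟩

lemma strictMono_eq_nth {k : ℕ} {A : Finset ℕ} (hA : A.card = k) {f : Fin k → ℕ}
    (hf : StrictMono f) (him : Finset.image f Finset.univ = A) :
    f = fun i : Fin k => nth A i := by
  have inst : WellFoundedLT (Fin k) := inferInstance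
  have h := @StrictMono.range_inj (Fin k) ℕ _ _ inst f (fun i : Fin k => nth A i) hf (nth_strictMono hA)
  rw [← h, ← Set.image_univ, ← Set.image_univ, ← Finset.coe_univ, ← Finset.coe_image,
    ← Finset.coe_image, him, nth_image_univ hA]

/-- `A` dominates `B`: every initial segment of `ℕ` contains at least as many
elements of `A` as of `B`. -/
def PrefCond (A B : Finset ℕ) : Prop :=
  ∀ t, (B.filter (· ≤ t)).card ≤ (A.filter (· ≤ t)).card

lemma prefCond_iff {A B : Finset ℕ} {k : ℕ} (hA : A.card = k) (hB : B.card = k) :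
    PrefCond A B ↔ ∀ i < k, nth A i ≤ nth B i := by
  constructor
  · intro h i hik
    have h1 : i + 1 ≤ (B.filter (· ≤ nth B i)).card :=
      (nth_le_iff_card (by omega)).1 le_rfl
    exact (nth_le_iff_card (i := i) (by omega)).2 (le_trans h1 (h (nth B i)))
  · intro h t
    set m := (B.filter (· ≤ t)).card with hm
    rcases Nat.eq_zero_or_pos m with h0 | h0
    · omega
    · have hmk : m ≤ k := by
        rw [hm, ← hB]; exact Finset.card_le_card (Finset.filter_subset _ _)
      have h1 : nth B (m - 1) ≤ t := (nth_le_iff_card (by omega)).2 (by omega)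
      have h2 : nth A (m - 1) ≤ t := le_trans (h (m - 1) (by omega)) h1
      have := (nth_le_iff_card (A := A) (i := m - 1) (t := t) (by omega)).1 h2
      omega

/-! ### Upper ideals and generators -/

lemma exists_gen {n : ℕ} {I : Finset (ℕ × ℕ)} (hI : IsUpperIdeal n I) {p : ℕ × ℕ}
    (hp : p ∈ I) : ∃ g, IsGenerator I g ∧ p.1 ≤ g.1 ∧ g.2 ≤ p.2 := by
  set S := I.filter (fun q => p.1 ≤ q.1 ∧ q.2 ≤ p.2) with hS
  have hne : S.Nonempty := ⟨p, by simp [hS, hp]⟩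
  obtain ⟨g, hgS, hmin⟩ := S.exists_min_image (fun q => q.2 - q.1) hne
  simp only [hS, Finset.mem_filter] at hgS
  refine ⟨g, ⟨hgS.1, ?_⟩, hgS.2.1, hgS.2.2⟩
  intro q hq h1 h2
  have hqS : q ∈ S := by
    simp only [hS, Finset.mem_filter]
    exact ⟨hq, le_trans hgS.2.1 h1, le_trans h2 hgS.2.2⟩
  have hle := hmin q hqS
  have hqr := (hI.1 q hq).2.1
  exact Prod.ext (by omega) (by omega)

lemma mem_upperClosure' {n : ℕ} {G : Finset (ℕ × ℕ)} {p : ℕ × ℕ} :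
    p ∈ upperClosure' n G ↔ IsPosRoot n p ∧ ∃ q ∈ G, p.1 ≤ q.1 ∧ q.2 ≤ p.2 := by
  simp only [upperClosure', Finset.mem_filter, Finset.mem_product, Finset.mem_Icc, IsPosRoot]
  constructor
  · rintro ⟨⟨⟨h1, h2⟩, h3, h4⟩, h5, h6⟩
    exact ⟨⟨h1, h5, h4⟩, h6⟩
  · rintro ⟨⟨h1, h2, h3⟩, h4⟩
    exact ⟨⟨⟨h1, by omega⟩, by omega, h3⟩, h2, h4⟩

lemma upperClosure'_gens {n : ℕ} {I G : Finset (ℕ × ℕ)} (hI : IsUpperIdeal n I)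
    (hG : ∀ p, p ∈ G ↔ IsGenerator I p) : upperClosure' n G = I := by
  ext p
  rw [mem_upperClosure']
  constructor
  · rintro ⟨hroot, q, hq, h1, h2⟩
    exact hI.2 q ((hG q).1 hq).1 p hroot h1 h2
  · intro hp
    obtain ⟨g, hgen, h1, h2⟩ := exists_gen hI hp
    exact ⟨hI.1 p hp, g, (hG g).2 hgen, h1, h2⟩

/-- Part (1) of the theorem, as a standalone lemma. -/
lemma part1 (n : ℕ) (I G : Finset (ℕ × ℕ)) (hI : IsUpperIdeal n I)
    (hG : ∀ p, p ∈ G ↔ IsGenerator I p) :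
    NormalizerEq n I ((G.image Prod.fst) ∪ (G.image fun p => p.2 - 1)) := by
  intro l hl1 hln
  constructor
  · rintro ⟨h0, h1, h2⟩ hmem
    simp only [Finset.mem_union, Finset.mem_image] at hmem
    rcases hmem with ⟨g, hg, hgl⟩ | ⟨g, hg, hgl⟩
    · rw [hG] at hg
      have hroot := hI.1 g hg.1
      by_cases hg2 : g.2 = g.1 + 1
      · refine h0 ?_
        have : (l, l + 1) = g := Prod.ext (by omega) (by omega)
        rw [this]; exact hg.1
      · have hlt : l + 1 < g.2 := by
          have := hroot.2.1; omega
        have hin := h1 g hg.1 hgl hlt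
        have := hg.2 _ hin (by simp; omega) (by simp)
        simp only [Prod.ext_iff] at this
        omega
    · rw [hG] at hg
      have hroot := hI.1 g hg.1
      have hg2 : g.2 = l + 1 := by omega
      by_cases hg1 : g.1 = l
      · refine h0 ?_
        have : (l, l + 1) = g := Prod.ext (by omega) (by omega)
        rw [this]; exact hg.1
      · have hlt : g.1 < l := by
          have := hroot.2.1; omega
        have hin := h2 g hg.1 hg2 hlt
        have := hg.2 _ hin (by simp) (by simp; omega)
        simp only [Prod.ext_iff] at this
        omega
  · intro hmem
    simp only [Finset.mem_union, Finset.mem_image, not_or, not_exists] at hmem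
    obtain ⟨hfst, hsnd⟩ := hmem
    have hfst' : ∀ g ∈ G, g.1 ≠ l := by
      intro g hg hc; exact hfst g ⟨hg, hc⟩
    have hsnd' : ∀ g ∈ G, g.2 ≠ l + 1 := by
      intro g hg hc
      have := hI.1 g ((hG g).1 hg).1
      exact hsnd g ⟨hg, by omega⟩
    refine ⟨?_, ?_, ?_⟩
    · intro hc
      have hgenc : IsGenerator I (l, l + 1) := by
        refine ⟨hc, fun q hq hq1 hq2 => ?_⟩
        have := (hI.1 q hq).2.1
        simp only at hq1 hq2
        exact Prod.ext (by omega) (by omega)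
      exact hfst' _ ((hG _).2 hgenc) rfl
    · intro p hp hp1 hp2
      obtain ⟨g, hgen, hg1, hg2⟩ := exists_gen hI hp
      have hgG := (hG g).2 hgen
      have hgl : l + 1 ≤ g.1 := by
        have := hfst' g hgG
        omega
      refine hI.2 g hgen.1 (l + 1, p.2) ⟨by omega, by simpa using hp2, (hI.1 p hp).2.2⟩
        (by simpa using hgl) (by simpa using hg2)
    · intro p hp hp2 hp1
      obtain ⟨g, hgen, hg1, hg2⟩ := exists_gen hI hp
      have hgG := (hG g).2 hgen
      have hgroot := hI.1 g hgen.1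
      have hgl : g.2 ≤ l := by
        have := hsnd' g hgG
        omega
      refine hI.2 g hgen.1 (p.1, l) ⟨(hI.1 p hp).1, by simpa using hp1, by omega⟩
        (by simpa using hg1) (by simpa using hgl)

end Aux


/-! ### Part 2 machinery -/

section Part2

open Finset

/-- The generating antichain of `idealOfPair`. -/
def gens (s : (k : ℕ) × ((Fin k → ℕ) × (Fin k → ℕ))) : Finset (ℕ × ℕ) :=
  Finset.image (fun i => (s.2.1 i, s.2.2 i + 1)) Finset.univ

lemma idealOfPair_eq (n : ℕ) (s : (k : ℕ) × ((Fin k → ℕ) × (Fin k → ℕ))) :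
    idealOfPair n s = upperClosure' n (gens s) := rfl

lemma upperClosure'_isUpperIdeal (n : ℕ) (G : Finset (ℕ × ℕ)) :
    IsUpperIdeal n (upperClosure' n G) := by
  constructor
  · intro p hp; exact (mem_upperClosure'.1 hp).1
  · intro p hp q hq h1 h2
    obtain ⟨hroot, g, hg, hg1, hg2⟩ := mem_upperClosure'.1 hp
    exact mem_upperClosure'.2 ⟨hq, g, hg, le_trans h1 hg1, le_trans hg2 h2⟩

lemma gens_isGen {n : ℕ} {E : Finset ℕ} {s : (k : ℕ) × ((Fin k → ℕ) × (Fin k → ℕ))}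
    (hs : GoodPair n E s) :
    ∀ p, p ∈ gens s ↔ IsGenerator (idealOfPair n s) p := by
  obtain ⟨k, a, b⟩ := s
  obtain ⟨ha, hb, hab1, hab2, hab, -⟩ := hs
  simp only at ha hb hab1 hab2 hab
  have hroot : ∀ i : Fin k, IsPosRoot n (a i, b i + 1) := by
    intro i
    exact ⟨(hab1 i).1, by have h1 := hab i; simp; omega, by have := (hab2 i).2; simp; omega⟩
  intro p
  constructor
  · intro hp
    obtain ⟨i, -, rfl⟩ := Finset.mem_image.1 hp
    have hmem : (a i, b i + 1) ∈ idealOfPair n ⟨k, (a, b)⟩ :=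
      mem_upperClosure'.2 ⟨hroot i, _,
        Finset.mem_image.2 ⟨i, Finset.mem_univ _, rfl⟩, le_rfl, le_rfl⟩
    refine ⟨hmem, ?_⟩
    intro q hq h1 h2
    obtain ⟨hqroot, g, hg, hg1, hg2⟩ := mem_upperClosure'.1 hq
    obtain ⟨j, -, rfl⟩ := Finset.mem_image.1 hg
    have hij : i ≤ j := by
      by_contra hc
      push_neg at hc
      have h3 : a j < a i := ha hc
      have h4 : a i ≤ a j := le_trans (show a i ≤ q.1 from h1) (show q.1 ≤ a j from hg1)
      omega
    have hji : j ≤ i := by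
      by_contra hc
      push_neg at hc
      have h3 : b i < b j := hb hc
      have h4 : b j + 1 ≤ b i + 1 :=
        le_trans (show b j + 1 ≤ q.2 from hg2) (show q.2 ≤ b i + 1 from h2)
      omega
    have hji' : i = j := le_antisymm hij hji
    subst hji'
    exact Prod.ext (le_antisymm (show q.1 ≤ a i from hg1) (show a i ≤ q.1 from h1))
      (le_antisymm (show q.2 ≤ b i + 1 from h2) (show b i + 1 ≤ q.2 from hg2))
  · intro hgen
    obtain ⟨hmem, hmin⟩ := hgen
    obtain ⟨hroot', g, hg, hg1, hg2⟩ := mem_upperClosure'.1 hmem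
    obtain ⟨j, -, rfl⟩ := Finset.mem_image.1 hg
    have hgmem : (a j, b j + 1) ∈ idealOfPair n ⟨k, (a, b)⟩ :=
      mem_upperClosure'.2 ⟨hroot j, _,
        Finset.mem_image.2 ⟨j, Finset.mem_univ _, rfl⟩, le_rfl, le_rfl⟩
    rw [← hmin _ hgmem hg1 hg2]
    exact Finset.mem_image.2 ⟨j, Finset.mem_univ _, rfl⟩

lemma normalizerEq_unique {n : ℕ} {I : Finset (ℕ × ℕ)} {E E' : Finset ℕ}
    (hE : E ⊆ Finset.Icc 1 n) (hE' : E' ⊆ Finset.Icc 1 n)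
    (h : NormalizerEq n I E) (h' : NormalizerEq n I E') : E = E' := by
  ext l
  constructor
  · intro hl
    have hb := Finset.mem_Icc.1 (hE hl)
    by_contra hl'
    exact ((h l hb.1 hb.2).1 ((h' l hb.1 hb.2).2 hl')) hl
  · intro hl
    have hb := Finset.mem_Icc.1 (hE' hl)
    by_contra hl'
    exact ((h' l hb.1 hb.2).1 ((h l hb.1 hb.2).2 hl')) hl

lemma genImages_subset {n : ℕ} {I G : Finset (ℕ × ℕ)} (hI : IsUpperIdeal n I)
    (hG : ∀ p, p ∈ G ↔ IsGenerator I p) :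
    (G.image Prod.fst ∪ G.image fun p => p.2 - 1) ⊆ Finset.Icc 1 n := by
  intro l hl
  simp only [Finset.mem_union, Finset.mem_image] at hl
  rw [Finset.mem_Icc]
  rcases hl with ⟨g, hg, rfl⟩ | ⟨g, hg, rfl⟩ <;>
    · have := hI.1 g ((hG g).1 hg).1
      obtain ⟨h1, h2, h3⟩ := this
      omega

lemma goodPair_mapsTo {n : ℕ} {E : Finset ℕ} (hE : E ⊆ Finset.Icc 1 n)
    {s : (k : ℕ) × ((Fin k → ℕ) × (Fin k → ℕ))} (hs : GoodPair n E s) :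
    IsUpperIdeal n (idealOfPair n s) ∧ NormalizerEq n (idealOfPair n s) E := by
  have h1 : IsUpperIdeal n (idealOfPair n s) := upperClosure'_isUpperIdeal n _
  have h2 := part1 n _ (gens s) h1 (gens_isGen hs)
  have e1 : (gens s).image Prod.fst = Finset.image s.2.1 Finset.univ := by
    rw [gens, Finset.image_image]
    rfl
  have e2 : ((gens s).image fun p => p.2 - 1) = Finset.image s.2.2 Finset.univ := by
    rw [gens, Finset.image_image]
    congr 1
  rw [e1, e2, hs.2.2.2.2.2] at h2
  exact ⟨h1, h2⟩

/-- distinct generators have distinct first coordinates -/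
lemma gen_fst_inj {I : Finset (ℕ × ℕ)} {g g' : ℕ × ℕ} (hg : IsGenerator I g)
    (hg' : IsGenerator I g') (h : g.1 = g'.1) : g = g' := by
  rcases le_total g.2 g'.2 with hle | hle
  · exact hg'.2 g hg.1 h.ge hle
  · exact (hg.2 g' hg'.1 h.le hle).symm

lemma gen_snd_lt {I : Finset (ℕ × ℕ)} {g g' : ℕ × ℕ} (hg : IsGenerator I g)
    (hg' : IsGenerator I g') (h : g.1 < g'.1) : g.2 < g'.2 := by
  by_contra hc
  push_neg at hc
  have h2 := hg.2 g' hg'.1 h.le hc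
  rw [h2] at h
  exact lt_irrefl _ h

lemma goodPair_injOn {n : ℕ} {E : Finset ℕ} :
    Set.InjOn (idealOfPair n) {s | GoodPair n E s} := by
  rintro ⟨k, a, b⟩ hs ⟨k', a', b'⟩ hs' heq
  simp only [Set.mem_setOf_eq] at hs hs'
  have hgens : gens ⟨k, (a, b)⟩ = gens ⟨k', (a', b')⟩ := by
    ext p
    rw [gens_isGen hs, gens_isGen hs', heq]
  have ha := hs.1
  have hb := hs.2.1
  have ha' := hs'.1
  have hb' := hs'.2.1
  simp only at ha hb ha' hb'
  have hfst := congrArg (Finset.image Prod.fst) hgens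
  rw [gens, gens, Finset.image_image, Finset.image_image] at hfst
  have hfst' : Finset.image a Finset.univ = Finset.image a' Finset.univ := hfst
  have hk : k = k' := by
    have c1 : (Finset.image a Finset.univ).card = k := by
      rw [Finset.card_image_of_injective _ ha.injective, Finset.card_univ, Fintype.card_fin]
    have c2 : (Finset.image a' Finset.univ).card = k' := by
      rw [Finset.card_image_of_injective _ ha'.injective, Finset.card_univ, Fintype.card_fin]
    rw [← c1, ← c2, hfst']
  subst hk
  have haa : a = a' := by
    have c1 : (Finset.image a Finset.univ).card = k := by
      rw [Finset.card_image_of_injective _ ha.injective, Finset.card_univ, Fintype.card_fin]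
    have e1 : a = fun i : Fin k => nth (Finset.image a Finset.univ) i :=
      strictMono_eq_nth c1 ha rfl
    have e2 : a' = fun i : Fin k => nth (Finset.image a Finset.univ) i :=
      strictMono_eq_nth c1 ha' hfst'.symm
    rw [e1, e2]
  subst haa
  have hbb : b = b' := by
    funext i
    have hmem : (a i, b i + 1) ∈ gens ⟨k, (a, b')⟩ := by
      rw [← hgens]
      exact Finset.mem_image.2 ⟨i, Finset.mem_univ _, rfl⟩
    obtain ⟨j, -, hj⟩ := Finset.mem_image.1 hmem
    have : j = i := ha.injective (congrArg Prod.fst hj)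
    subst this
    have := congrArg Prod.snd hj
    simpa using this.symm
  rw [hbb]

lemma goodPair_surjOn {n : ℕ} {E : Finset ℕ} (hE : E ⊆ Finset.Icc 1 n) :
    Set.SurjOn (idealOfPair n) {s | GoodPair n E s}
      {I : Finset (ℕ × ℕ) | IsUpperIdeal n I ∧ NormalizerEq n I E} := by
  rintro I ⟨hI, hN⟩
  set G := I.filter (IsGenerator I) with hGdef
  have hG : ∀ p, p ∈ G ↔ IsGenerator I p := by
    intro p
    rw [hGdef, Finset.mem_filter]
    exact ⟨fun h => h.2, fun h => ⟨h.1, h⟩⟩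
  have hroots : ∀ g ∈ G, IsPosRoot n g := fun g hg => hI.1 g ((hG g).1 hg).1
  set A := G.image Prod.fst with hAdef
  have hfstInj : Set.InjOn Prod.fst (G : Set (ℕ × ℕ)) := by
    intro g hg g' hg' h
    exact gen_fst_inj ((hG g).1 hg) ((hG g').1 hg') h
  set k := G.card with hk
  have hAcard : A.card = k := Finset.card_image_of_injOn hfstInj
  set a : Fin k → ℕ := fun i => nth A i with hadef
  have hφ : ∀ i : Fin k, ∃ g, g ∈ G ∧ g.1 = a i := by
    intro i
    have : a i ∈ A := nth_mem (by rw [hAcard]; exact i.isLt)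
    obtain ⟨g, hg, hg1⟩ := Finset.mem_image.1 this
    exact ⟨g, hg, hg1⟩
  choose φ hφG hφ1 using hφ
  set b : Fin k → ℕ := fun i => (φ i).2 - 1 with hbdef
  have hbval : ∀ i, b i + 1 = (φ i).2 := by
    intro i
    obtain ⟨r1, r2, r3⟩ := hroots _ (hφG i)
    show (φ i).2 - 1 + 1 = (φ i).2
    omega
  have hpair : ∀ i, (a i, b i + 1) = φ i := by
    intro i
    exact Prod.ext (hφ1 i).symm (hbval i)
  have haSM : StrictMono a := nth_strictMono hAcard
  have hφ2lt : ∀ i j : Fin k, i < j → (φ i).2 < (φ j).2 := by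
    intro i j hij
    refine gen_snd_lt ((hG _).1 (hφG i)) ((hG _).1 (hφG j)) ?_
    rw [hφ1 i, hφ1 j]
    exact haSM hij
  have hbSM : StrictMono b := by
    intro i j hij
    have h1 := hφ2lt i j hij
    have r1 := (hroots _ (hφG i)).2.1
    have r2 := (hroots _ (hφG i)).1
    show (φ i).2 - 1 < (φ j).2 - 1
    omega
  have hgensG : gens ⟨k, (a, b)⟩ = G := by
    apply Finset.Subset.antisymm
    · intro p hp
      obtain ⟨i, -, rfl⟩ := Finset.mem_image.1 hp
      rw [hpair i]
      exact hφG i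
    · intro g hg
      have : g.1 ∈ A := Finset.mem_image.2 ⟨g, hg, rfl⟩
      obtain ⟨i0, hi0, hnth⟩ := nth_exists this
      have hi0k : i0 < k := by rw [← hAcard]; exact hi0
      have : φ ⟨i0, hi0k⟩ = g := by
        refine gen_fst_inj ((hG _).1 (hφG ⟨i0, hi0k⟩)) ((hG g).1 hg) ?_
        rw [hφ1 ⟨i0, hi0k⟩]
        exact hnth
      refine Finset.mem_image.2 ⟨⟨i0, hi0k⟩, Finset.mem_univ _, ?_⟩
      rw [hpair ⟨i0, hi0k⟩, this]
  have hIdeal : idealOfPair n ⟨k, (a, b)⟩ = I := by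
    rw [idealOfPair_eq, hgensG, upperClosure'_gens hI hG]
  have hφim : Finset.image φ Finset.univ = G := by
    rw [← hgensG, gens]
    apply Finset.image_congr
    intro i _
    exact (hpair i).symm
  have hUnionE : Finset.image a Finset.univ ∪ Finset.image b Finset.univ = E := by
    have h2 := part1 n I G hI hG
    have hsub := genImages_subset hI hG
    have hEeq := normalizerEq_unique hsub hE h2 hN
    have e1 : Finset.image a Finset.univ = A := nth_image_univ hAcard
    have e2 : Finset.image b Finset.univ = Finset.image (fun p => p.2 - 1) G := by
      rw [← hφim, Finset.image_image]
      rfl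
    rw [e1, e2, hAdef]
    exact hEeq
  refine ⟨⟨k, (a, b)⟩, ?_, hIdeal⟩
  simp only [Set.mem_setOf_eq, GoodPair]
  refine ⟨haSM, hbSM, ?_, ?_, ?_, hUnionE⟩
  · intro i
    have := hroots _ (hφG i)
    have h1 := hφ1 i
    obtain ⟨r1, r2, r3⟩ := this
    constructor
    · omega
    · omega
  · intro i
    have := hroots _ (hφG i)
    obtain ⟨r1, r2, r3⟩ := this
    constructor
    · show 1 ≤ (φ i).2 - 1
      omega
    · show (φ i).2 - 1 ≤ n
      omega
  · intro i
    have := hroots _ (hφG i)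
    obtain ⟨r1, r2, r3⟩ := this
    show a i ≤ (φ i).2 - 1
    have h1 := hφ1 i
    omega

lemma part2 {n : ℕ} {E : Finset ℕ} (hE : E ⊆ Finset.Icc 1 n) :
    Set.BijOn (idealOfPair n) {s | GoodPair n E s}
      {I : Finset (ℕ × ℕ) | IsUpperIdeal n I ∧ NormalizerEq n I E} := by
  refine ⟨?_, goodPair_injOn, goodPair_surjOn hE⟩
  intro s hs
  exact goodPair_mapsTo hE hs

end Part2


/-! ### Part 3: counting -/

section Part3

open Finset

lemma prefCond_restrict {T U D : Finset ℕ} (hD : D ⊆ T)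
    (h : ∀ x ∈ T, (D.filter (· ≤ x)).card ≤ (U.filter (· ≤ x)).card) :
    PrefCond U D := by
  intro t
  rcases Finset.eq_empty_or_nonempty (D.filter (· ≤ t)) with he | hne
  · simp [he]
  · set d := (D.filter (· ≤ t)).max' hne with hd
    have hdmem := (D.filter (· ≤ t)).max'_mem hne
    rw [Finset.mem_filter] at hdmem
    have hDeq : D.filter (· ≤ t) = D.filter (· ≤ d) := by
      ext x
      simp only [Finset.mem_filter]
      constructor
      · rintro ⟨h1, h2⟩
        exact ⟨h1, Finset.le_max' (D.filter (· ≤ t)) x (Finset.mem_filter.2 ⟨h1, h2⟩)⟩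
      · rintro ⟨h1, h2⟩
        exact ⟨h1, le_trans h2 hdmem.2⟩
    have hUsub : U.filter (· ≤ d) ⊆ U.filter (· ≤ t) :=
      Finset.monotone_filter_right U (fun x _ hx => le_trans hx hdmem.2)
    calc (D.filter (· ≤ t)).card = (D.filter (· ≤ d)).card := by rw [hDeq]
      _ ≤ (U.filter (· ≤ d)).card := h d (hD hdmem.1)
      _ ≤ (U.filter (· ≤ t)).card := Finset.card_le_card hUsub

/-- The set of "splittings" of `T` realising it as a union of an interleaved pair. -/
def splits (T : Finset ℕ) : Finset (Finset ℕ) :=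
  T.powerset.filter (fun U => 2 * U.card = T.card ∧ PrefCond U (T \ U))

lemma mem_splits {T U : Finset ℕ} :
    U ∈ splits T ↔ U ⊆ T ∧ 2 * U.card = T.card ∧ PrefCond U (T \ U) := by
  simp only [splits, Finset.mem_filter, Finset.mem_powerset, and_assoc]

lemma splits_eq_empty_of_odd {T : Finset ℕ} (h : ¬ Even T.card) : splits T = ∅ := by
  rw [Finset.eq_empty_iff_forall_notMem]
  intro U hU
  rw [mem_splits] at hU
  exact h ⟨U.card, by omega⟩

section Transfer

variable {m : ℕ} {g : ℕ → ℕ} (hmono : ∀ i j, i < j → j < m → g i < g j)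
include hmono

lemma transfer_inj {x y : ℕ} (hx : x < m) (hy : y < m) (hxy : g x = g y) : x = y := by
  rcases lt_trichotomy x y with h | h | h
  · exact absurd hxy (hmono x y h hy).ne
  · exact h
  · exact absurd hxy.symm (hmono y x h hx).ne

lemma transfer_injOn {S : Finset ℕ} (hS : S ⊆ Finset.range m) : Set.InjOn g ↑S :=
  fun x hx y hy hxy => transfer_inj hmono
    (Finset.mem_range.1 (hS (Finset.mem_coe.1 hx)))
    (Finset.mem_range.1 (hS (Finset.mem_coe.1 hy))) hxy

lemma transfer_filter_card {S : Finset ℕ} (hS : S ⊆ Finset.range m) {j : ℕ} (hj : j < m) :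
    ((S.image g).filter (· ≤ g j)).card = (S.filter (· ≤ j)).card := by
  have heq : (S.image g).filter (· ≤ g j) = (S.filter (· ≤ j)).image g := by
    ext y
    simp only [Finset.mem_filter, Finset.mem_image]
    constructor
    · rintro ⟨⟨x, hx, rfl⟩, hle⟩
      refine ⟨x, ⟨hx, ?_⟩, rfl⟩
      by_contra hc
      push_neg at hc
      have hxm := Finset.mem_range.1 (hS hx)
      exact absurd hle (not_le.2 (hmono j x hc hxm))
    · rintro ⟨x, ⟨hx, hxj⟩, rfl⟩
      refine ⟨⟨x, hx, rfl⟩, ?_⟩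
      rcases hxj.lt_or_eq with h | h
      · exact (hmono x j h hj).le
      · rw [h]
  rw [heq, Finset.card_image_of_injOn
    (transfer_injOn hmono ((Finset.filter_subset _ _).trans hS))]

lemma transfer_sdiff {S : Finset ℕ} (hS : S ⊆ Finset.range m) :
    ((Finset.range m).image g) \ (S.image g) = ((Finset.range m) \ S).image g := by
  ext y
  simp only [Finset.mem_sdiff, Finset.mem_image]
  constructor
  · rintro ⟨⟨i, hi, rfl⟩, hnot⟩
    exact ⟨i, ⟨hi, fun hc => hnot ⟨i, hc, rfl⟩⟩, rfl⟩
  · rintro ⟨i, ⟨hi1, hi2⟩, rfl⟩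
    refine ⟨⟨i, hi1, rfl⟩, ?_⟩
    rintro ⟨x, hx, hxe⟩
    have := transfer_inj hmono (Finset.mem_range.1 (hS hx)) (Finset.mem_range.1 hi1) hxe
    exact hi2 (this ▸ hx)

lemma transfer_splits {T : Finset ℕ} (him : (Finset.range m).image g = T) :
    (splits (Finset.range m)).card = (splits T).card := by
  have hTcard : T.card = m := by
    rw [← him, Finset.card_image_of_injOn (transfer_injOn hmono Finset.Subset.rfl),
      Finset.card_range]
  refine Finset.card_nbij' (fun S => S.image g)
    (fun V => (Finset.range m).filter (fun i => g i ∈ V)) ?_ ?_ ?_ ?_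
  · -- forward maps-to
    intro S hS
    rw [Finset.mem_coe, mem_splits] at hS ⊢
    obtain ⟨hsub, hcard, hpc⟩ := hS
    rw [Finset.card_range] at hcard
    have hc : (S.image g).card = S.card :=
      Finset.card_image_of_injOn (transfer_injOn hmono hsub)
    have hcompl : T \ (S.image g) = ((Finset.range m) \ S).image g := by
      rw [← him]
      exact transfer_sdiff hmono hsub
    refine ⟨by rw [← him]; exact Finset.image_subset_image hsub, by rw [hc, hTcard]; omega, ?_⟩
    rw [hcompl]
    apply prefCond_restrict (T := T)
    · rw [← him]
      exact Finset.image_subset_image Finset.sdiff_subset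
    · intro x hx
      obtain ⟨j, hj, rfl⟩ := Finset.mem_image.1 (him ▸ hx)
      have hjm := Finset.mem_range.1 hj
      rw [transfer_filter_card hmono hsub hjm,
        transfer_filter_card hmono Finset.sdiff_subset hjm]
      exact hpc j
  · -- backward maps-to
    intro V hV
    rw [Finset.mem_coe, mem_splits] at hV ⊢
    obtain ⟨hsub, hcard, hpc⟩ := hV
    set S := (Finset.range m).filter (fun i => g i ∈ V) with hSdef
    have hSsub : S ⊆ Finset.range m := Finset.filter_subset _ _
    have hVeq : S.image g = V := by
      apply Finset.Subset.antisymm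
      · intro y hy
        obtain ⟨i, hi, rfl⟩ := Finset.mem_image.1 hy
        exact (Finset.mem_filter.1 hi).2
      · intro y hy
        obtain ⟨i, hi, rfl⟩ := Finset.mem_image.1 (him ▸ hsub hy)
        exact Finset.mem_image.2 ⟨i, Finset.mem_filter.2 ⟨hi, hy⟩, rfl⟩
    have hScard : S.card = V.card := by
      rw [← hVeq, Finset.card_image_of_injOn (transfer_injOn hmono hSsub)]
    refine ⟨hSsub, by rw [Finset.card_range, hScard, ← hTcard]; omega, ?_⟩
    apply prefCond_restrict (T := Finset.range m) Finset.sdiff_subset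
    intro j hj
    have hjm := Finset.mem_range.1 hj
    have e1 : ((Finset.range m \ S).filter (· ≤ j)).card
        = (((Finset.range m \ S).image g).filter (· ≤ g j)).card :=
      (transfer_filter_card hmono Finset.sdiff_subset hjm).symm
    have e2 : ((S.filter (· ≤ j))).card = ((S.image g).filter (· ≤ g j)).card :=
      (transfer_filter_card hmono hSsub hjm).symm
    have e3 : (Finset.range m \ S).image g = T \ V := by
      rw [← hVeq, ← him]
      exact (transfer_sdiff hmono hSsub).symm
    rw [e1, e2, e3, hVeq]
    exact hpc (g j)
  · -- left inverse
    intro S hS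
    rw [Finset.mem_coe, mem_splits] at hS
    ext i
    simp only [Finset.mem_filter, Finset.mem_range, Finset.mem_image]
    constructor
    · rintro ⟨hi, x, hx, hxe⟩
      have := transfer_inj hmono (Finset.mem_range.1 (hS.1 hx)) hi hxe
      exact this ▸ hx
    · intro hi
      exact ⟨Finset.mem_range.1 (hS.1 hi), i, hi, rfl⟩
  · -- right inverse
    intro V hV
    rw [Finset.mem_coe, mem_splits] at hV
    apply Finset.Subset.antisymm
    · intro y hy
      obtain ⟨i, hi, rfl⟩ := Finset.mem_image.1 hy
      exact (Finset.mem_filter.1 hi).2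
    · intro y hy
      obtain ⟨i, hi, rfl⟩ := Finset.mem_image.1 (him ▸ hV.1 hy)
      exact Finset.mem_image.2 ⟨i, Finset.mem_filter.2 ⟨hi, hy⟩, rfl⟩

end Transfer

lemma nth_image_range {T : Finset ℕ} : (Finset.range T.card).image (nth T) = T := by
  apply Finset.Subset.antisymm
  · intro x hx
    obtain ⟨i, hi, rfl⟩ := Finset.mem_image.1 hx
    exact nth_mem (Finset.mem_range.1 hi)
  · intro x hx
    obtain ⟨i, hi, rfl⟩ := nth_exists hx
    exact Finset.mem_image.2 ⟨i, Finset.mem_range.2 hi, rfl⟩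

lemma splits_card_eq_range {T : Finset ℕ} :
    (splits T).card = (splits (Finset.range T.card)).card :=
  (transfer_splits (fun i j hij hj => nth_lt_nth hij hj) nth_image_range).symm

end Part3


section Dyck

open DyckStep

/-- The word of a subset `S ⊆ range m`: position `i` is `U` iff `i ∈ S`. -/
def wordOf (m : ℕ) (S : Finset ℕ) : List DyckStep :=
  (List.range m).map (fun i => if i ∈ S then U else D)

lemma length_wordOf (m : ℕ) (S : Finset ℕ) : (wordOf m S).length = m := by
  simp [wordOf]

lemma count_word (f : ℕ → DyckStep) (c : DyckStep) (j : ℕ) :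
    ((List.range j).map f).count c = ((Finset.range j).filter (fun i => f i = c)).card := by
  induction j with
  | zero => simp
  | succ j ih =>
    rw [List.range_succ, List.map_append, List.count_append, Finset.range_add_one,
      Finset.filter_insert]
    by_cases h : f j = c
    · rw [if_pos h, Finset.card_insert_of_notMem (fun hc => by simp at hc)]
      simp [List.count_cons, h, ih]
    · rw [if_neg h]
      simp [List.count_cons, h, ih]

lemma wordOf_countU (j : ℕ) (S : Finset ℕ) :
    (wordOf j S).count U = (S.filter (· < j)).card := by
  rw [wordOf, count_word]
  congr 1
  ext i
  simp only [Finset.mem_filter, Finset.mem_range]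
  constructor
  · rintro ⟨h1, h2⟩
    by_cases h : i ∈ S
    · exact ⟨h, h1⟩
    · rw [if_neg h] at h2
      exact absurd h2 (by simp)
  · rintro ⟨h1, h2⟩
    exact ⟨h2, by rw [if_pos h1]⟩

lemma wordOf_countD {m : ℕ} {S : Finset ℕ} (hsub : S ⊆ Finset.range m) {j : ℕ} (hj : j ≤ m) :
    (wordOf j S).count D = ((Finset.range m \ S).filter (· < j)).card := by
  rw [wordOf, count_word]
  congr 1
  ext i
  simp only [Finset.mem_filter, Finset.mem_range, Finset.mem_sdiff]
  constructor
  · rintro ⟨h1, h2⟩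
    by_cases h : i ∈ S
    · rw [if_pos h] at h2
      exact absurd h2 (by simp)
    · exact ⟨⟨by omega, h⟩, h1⟩
  · rintro ⟨⟨h1, h2⟩, h3⟩
    exact ⟨h3, by rw [if_neg h2]⟩

lemma wordOf_take (m : ℕ) (S : Finset ℕ) (i : ℕ) :
    (wordOf m S).take i = wordOf (min i m) S := by
  rw [wordOf, wordOf, ← List.map_take, List.take_range]

lemma filter_lt_eq_filter_le (S : Finset ℕ) {j : ℕ} (hj : 1 ≤ j) :
    S.filter (· < j) = S.filter (· ≤ j - 1) := by
  ext x
  simp only [Finset.mem_filter, and_congr_right_iff]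
  intro _
  omega

lemma filter_le_eq_filter_lt (S : Finset ℕ) (t : ℕ) :
    S.filter (· ≤ t) = S.filter (· < t + 1) := by
  ext x
  simp only [Finset.mem_filter, and_congr_right_iff]
  intro _
  omega

/-- The Dyck word associated to a splitting of `range m`. -/
def dyckOf (m : ℕ) (S : Finset ℕ) (hsub : S ⊆ Finset.range m) (hcard : 2 * S.card = m)
    (hpc : PrefCond S (Finset.range m \ S)) : DyckWord where
  toList := wordOf m S
  count_U_eq_count_D := by
    rw [wordOf_countU, wordOf_countD hsub le_rfl]
    have e1 : S.filter (· < m) = S := by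
      apply Finset.filter_true_of_mem
      intro x hx
      exact Finset.mem_range.1 (hsub hx)
    have e2 : (Finset.range m \ S).filter (· < m) = Finset.range m \ S := by
      apply Finset.filter_true_of_mem
      intro x hx
      exact Finset.mem_range.1 (Finset.mem_sdiff.1 hx).1
    rw [e1, e2, Finset.card_sdiff_of_subset hsub, Finset.card_range]
    omega
  count_D_le_count_U i := by
    rw [wordOf_take, wordOf_countU, wordOf_countD hsub (min_le_right i m)]
    set j := min i m with hjdef
    rcases Nat.eq_zero_or_pos j with h0 | h0
    · simp [h0]
    · rw [filter_lt_eq_filter_le S h0, filter_lt_eq_filter_le _ h0]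
      exact hpc (j - 1)

lemma semilength_dyckOf (m : ℕ) (S : Finset ℕ) (hsub : S ⊆ Finset.range m)
    (hcard : 2 * S.card = m) (hpc : PrefCond S (Finset.range m \ S)) :
    (dyckOf m S hsub hcard hpc).semilength = S.card := by
  show (wordOf m S).count U = S.card
  rw [wordOf_countU]
  congr 1
  apply Finset.filter_true_of_mem
  intro x hx
  exact Finset.mem_range.1 (hsub hx)

/-- The subset of positions of `U`s in a Dyck word. -/
def posOf (p : DyckWord) : Finset ℕ :=
  (Finset.range p.toList.length).filter (fun i => p.toList.getD i D = U)

lemma wordOf_posOf (p : DyckWord) : wordOf p.toList.length (posOf p) = p.toList := by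
  apply List.ext_getElem
  · rw [length_wordOf]
  · intro i h1 h2
    rw [length_wordOf] at h1
    show ((List.range p.toList.length).map (fun i => if i ∈ posOf p then U else D))[i]'(by
      simpa [wordOf] using h1) = _
    rw [List.getElem_map, List.getElem_range]
    have hmem : i ∈ posOf p ↔ p.toList.getD i D = U := by
      simp only [posOf, Finset.mem_filter, Finset.mem_range]
      exact ⟨fun h => h.2, fun h => ⟨h1, h⟩⟩
    rw [List.getD_eq_getElem p.toList D h1] at hmem
    by_cases h : p.toList[i] = U
    · rw [if_pos (hmem.2 h), h]
    · rw [if_neg (fun hc => h (hmem.1 hc)), (p.toList[i]).dichotomy.resolve_left h]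

lemma posOf_mem_splits (p : DyckWord) : posOf p ∈ splits (Finset.range p.toList.length) := by
  set L := p.toList.length with hL
  set S := posOf p with hS
  have hsub : S ⊆ Finset.range L := Finset.filter_subset _ _
  have hw : wordOf L S = p.toList := wordOf_posOf p
  have hcount : S.card = p.toList.count U := by
    rw [← hw, wordOf_countU]
    congr 1
    apply (Finset.filter_true_of_mem ?_).symm
    intro x hx
    exact Finset.mem_range.1 (hsub hx)
  have hcard : 2 * S.card = L := by
    rw [hcount]
    exact p.two_mul_semilength_eq_length
  rw [mem_splits, Finset.card_range]
  refine ⟨hsub, hcard, ?_⟩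
  intro t
  rcases le_or_gt L t with hLt | htL
  · -- filters are everything; equality of cards
    have e1 : S.filter (· ≤ t) = S := Finset.filter_true_of_mem
      (fun x hx => le_trans (Nat.le_of_lt_succ (Nat.lt_succ_of_lt
        (Finset.mem_range.1 (hsub hx)))) hLt)
    have e2 : (Finset.range L \ S).filter (· ≤ t) = Finset.range L \ S :=
      Finset.filter_true_of_mem
        (fun x hx => le_trans (Nat.le_of_lt (Finset.mem_range.1 (Finset.mem_sdiff.1 hx).1)) hLt)
    rw [e1, e2, Finset.card_sdiff_of_subset hsub, Finset.card_range]
    omega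
  · have hprefix := p.count_D_le_count_U (t + 1)
    rw [← hw, wordOf_take, wordOf_countU,
      wordOf_countD hsub (min_le_right (t + 1) L)] at hprefix
    have hmin : min (t + 1) L = t + 1 := min_eq_left (by omega)
    rw [hmin] at hprefix
    rw [filter_le_eq_filter_lt, filter_le_eq_filter_lt]
    exact hprefix

lemma posOf_dyckOf (m : ℕ) (S : Finset ℕ) (hsub : S ⊆ Finset.range m)
    (hcard : 2 * S.card = m) (hpc : PrefCond S (Finset.range m \ S)) :
    posOf (dyckOf m S hsub hcard hpc) = S := by
  have hlen : (dyckOf m S hsub hcard hpc).toList.length = m := length_wordOf m S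
  ext i
  simp only [posOf, Finset.mem_filter, Finset.mem_range, hlen]
  show (i < m ∧ (wordOf m S).getD i D = U) ↔ i ∈ S
  constructor
  · rintro ⟨hi, hg⟩
    rw [List.getD_eq_getElem _ D (by rw [length_wordOf]; exact hi)] at hg
    show i ∈ S
    have : (wordOf m S)[i]'(by rw [length_wordOf]; exact hi) = if i ∈ S then U else D := by
      simp [wordOf]
    rw [this] at hg
    by_contra hc
    rw [if_neg hc] at hg
    exact absurd hg (by simp)
  · intro hi
    have him : i < m := Finset.mem_range.1 (hsub hi)
    refine ⟨him, ?_⟩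
    rw [List.getD_eq_getElem _ D (by rw [length_wordOf]; exact him)]
    show (wordOf m S)[i]'_ = U
    have : (wordOf m S)[i]'(by rw [length_wordOf]; exact him) = if i ∈ S then U else D := by
      simp [wordOf]
    rw [this, if_pos hi]

lemma splits_range_card (r : ℕ) : (splits (Finset.range (2 * r))).card = catalan r := by
  rw [← DyckWord.card_dyckWord_semilength_eq_catalan r,
    ← Fintype.card_coe (splits (Finset.range (2 * r)))]
  exact Fintype.card_congr
    { toFun := fun S => ⟨dyckOf (2 * r) S.1 (mem_splits.1 S.2).1
        (by have := (mem_splits.1 S.2).2.1; rwa [Finset.card_range] at this)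
        (mem_splits.1 S.2).2.2, by
          rw [semilength_dyckOf]
          have := (mem_splits.1 S.2).2.1
          rw [Finset.card_range] at this
          omega⟩
      invFun := fun p => ⟨posOf p.1, by
        have hlen : p.1.toList.length = 2 * r := by
          rw [← p.1.two_mul_semilength_eq_length, p.2]
        have := posOf_mem_splits p.1
        rwa [hlen] at this⟩
      left_inv := fun S => Subtype.ext (posOf_dyckOf (2 * r) S.1 (mem_splits.1 S.2).1
        (by have := (mem_splits.1 S.2).2.1; rwa [Finset.card_range] at this)
        (mem_splits.1 S.2).2.2)
      right_inv := fun p => Subtype.ext (by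
        apply DyckWord.ext
        show wordOf (2 * r) (posOf p.1) = p.1.toList
        have hlen : p.1.toList.length = 2 * r := by
          rw [← p.1.two_mul_semilength_eq_length, p.2]
        rw [← hlen]
        exact wordOf_posOf p.1) }

lemma splits_card (T : Finset ℕ) :
    (splits T).card = if Even T.card then catalan (T.card / 2) else 0 := by
  by_cases h : Even T.card
  · rw [if_pos h]
    obtain ⟨r, hr⟩ := h
    rw [splits_card_eq_range]
    have : T.card = 2 * r := by omega
    rw [this, splits_range_card]
    congr 1
    omega
  · rw [if_neg h, splits_eq_empty_of_odd h, Finset.card_empty]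

end Dyck


section Count

open Finset

/-- The finite model for good pairs: the pair of images `(A, B)`. -/
def pairsFin (E : Finset ℕ) : Finset (Finset ℕ × Finset ℕ) :=
  (E.powerset ×ˢ E.powerset).filter
    (fun q => q.1 ∪ q.2 = E ∧ q.1.card = q.2.card ∧ PrefCond q.1 q.2)

lemma mem_pairsFin {E : Finset ℕ} {q : Finset ℕ × Finset ℕ} :
    q ∈ pairsFin E ↔
      q.1 ⊆ E ∧ q.2 ⊆ E ∧ q.1 ∪ q.2 = E ∧ q.1.card = q.2.card ∧ PrefCond q.1 q.2 := by
  simp only [pairsFin, Finset.mem_filter, Finset.mem_product, Finset.mem_powerset, and_assoc]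

/-- The map from good pairs to the finite model. -/
def toPairs (s : (k : ℕ) × ((Fin k → ℕ) × (Fin k → ℕ))) : Finset ℕ × Finset ℕ :=
  (Finset.image s.2.1 Finset.univ, Finset.image s.2.2 Finset.univ)

lemma goodPair_pairs_bijOn {n : ℕ} {E : Finset ℕ} (hE : E ⊆ Finset.Icc 1 n) :
    Set.BijOn toPairs {s | GoodPair n E s} ↑(pairsFin E) := by
  refine ⟨?_, ?_, ?_⟩
  · -- MapsTo
    rintro ⟨k, a, b⟩ hs
    obtain ⟨ha, hb, ha1, hb1, hab, hun⟩ := hs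
    simp only at ha hb ha1 hb1 hab hun
    set A := Finset.image a Finset.univ with hA
    set B := Finset.image b Finset.univ with hB
    have cA : A.card = k := by
      rw [hA, Finset.card_image_of_injective _ ha.injective, Finset.card_univ, Fintype.card_fin]
    have cB : B.card = k := by
      rw [hB, Finset.card_image_of_injective _ hb.injective, Finset.card_univ, Fintype.card_fin]
    have hpc : PrefCond A B := by
      rw [prefCond_iff cA cB]
      intro i hik
      have ea := strictMono_eq_nth cA ha rfl
      have eb := strictMono_eq_nth cB hb rfl
      have e1 := congrFun ea ⟨i, hik⟩
      have e2 := congrFun eb ⟨i, hik⟩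
      rw [← e1, ← e2]
      exact hab ⟨i, hik⟩
    exact mem_pairsFin.2 ⟨show A ⊆ E by rw [← hun]; exact Finset.subset_union_left,
      show B ⊆ E by rw [← hun]; exact Finset.subset_union_right, hun,
      show A.card = B.card by rw [cA, cB], hpc⟩
  · -- InjOn
    rintro ⟨k, a, b⟩ hs ⟨k', a', b'⟩ hs' heq
    simp only [Set.mem_setOf_eq] at hs hs'
    have ha := hs.1
    have hb := hs.2.1
    have ha' := hs'.1
    have hb' := hs'.2.1
    simp only at ha hb ha' hb'
    have hfst : Finset.image a Finset.univ = Finset.image a' Finset.univ :=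
      congrArg Prod.fst heq
    have hsnd : Finset.image b Finset.univ = Finset.image b' Finset.univ :=
      congrArg Prod.snd heq
    have cA : (Finset.image a Finset.univ).card = k := by
      rw [Finset.card_image_of_injective _ ha.injective, Finset.card_univ, Fintype.card_fin]
    have cA' : (Finset.image a' Finset.univ).card = k' := by
      rw [Finset.card_image_of_injective _ ha'.injective, Finset.card_univ, Fintype.card_fin]
    have hk : k = k' := by rw [← cA, ← cA', hfst]
    subst hk
    have haa : a = a' := by
      have e1 : a = fun i : Fin k => nth (Finset.image a Finset.univ) i :=
        strictMono_eq_nth cA ha rfl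
      have e2 : a' = fun i : Fin k => nth (Finset.image a Finset.univ) i :=
        strictMono_eq_nth cA ha' hfst.symm
      rw [e1, e2]
    have cB : (Finset.image b Finset.univ).card = k := by
      rw [Finset.card_image_of_injective _ hb.injective, Finset.card_univ, Fintype.card_fin]
    have hbb : b = b' := by
      have e1 : b = fun i : Fin k => nth (Finset.image b Finset.univ) i :=
        strictMono_eq_nth cB hb rfl
      have e2 : b' = fun i : Fin k => nth (Finset.image b Finset.univ) i :=
        strictMono_eq_nth cB hb' hsnd.symm
      rw [e1, e2]
    rw [haa, hbb]
  · -- SurjOn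
    rintro ⟨A, B⟩ hq
    rw [Finset.mem_coe, mem_pairsFin] at hq
    obtain ⟨hA, hB, hun, hcard, hpc⟩ := hq
    simp only at hA hB hun hcard hpc
    refine ⟨⟨A.card, (fun i => nth A i, fun i => nth B i)⟩, ?_, ?_⟩
    · show GoodPair n E _
      have cB : B.card = A.card := hcard.symm
      refine ⟨nth_strictMono rfl, nth_strictMono cB, ?_, ?_, ?_, ?_⟩
      · intro i
        have := Finset.mem_Icc.1 (hE (hA (nth_mem (A := A) i.isLt)))
        exact this
      · intro i
        have hiB : (i : ℕ) < B.card := by rw [cB]; exact i.isLt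
        have := Finset.mem_Icc.1 (hE (hB (nth_mem (A := B) hiB)))
        exact this
      · intro i
        exact (prefCond_iff rfl cB).1 hpc i i.isLt
      · show Finset.image (fun i : Fin A.card => nth A i) Finset.univ
            ∪ Finset.image (fun i : Fin A.card => nth B i) Finset.univ = E
        rw [nth_image_univ rfl, nth_image_univ cB]
        exact hun
    · show toPairs _ = (A, B)
      have cB : B.card = A.card := hcard.symm
      apply Prod.ext
      · show Finset.image (fun i : Fin A.card => nth A i) Finset.univ = A
        exact nth_image_univ rfl
      · show Finset.image (fun i : Fin A.card => nth B i) Finset.univ = B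
        exact nth_image_univ cB

lemma pairsFin_card_eq_sigma (E : Finset ℕ) :
    (pairsFin E).card = (E.powerset.sigma (fun T => splits T)).card := by
  refine Finset.card_nbij' (fun q => ⟨(q.1 \ q.2) ∪ (q.2 \ q.1), q.1 \ q.2⟩)
    (fun x => (E \ (x.1 \ x.2), E \ x.2)) ?_ ?_ ?_ ?_
  · -- forward maps-to
    rintro ⟨A, B⟩ hq
    rw [Finset.mem_coe, mem_pairsFin] at hq
    obtain ⟨hA, hB, hun, hcard, hpc⟩ := hq
    simp only at hA hB hun hcard hpc
    dsimp only
    have hdisj : Disjoint (A \ B) (B \ A) := disjoint_sdiff_sdiff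
    have hsd : (A \ B).card = (B \ A).card := by
      have e1 := Finset.card_sdiff_add_card_inter A B
      have e2 := Finset.card_sdiff_add_card_inter B A
      rw [Finset.inter_comm B A] at e2
      omega
    have hTU : ((A \ B) ∪ (B \ A)) \ (A \ B) = B \ A := by
      ext x
      simp only [Finset.mem_sdiff, Finset.mem_union]
      tauto
    refine Finset.mem_sigma.2 ⟨Finset.mem_powerset.2 ?_,
      mem_splits.2 ⟨Finset.subset_union_left, ?_, ?_⟩⟩
    · show (A \ B) ∪ (B \ A) ⊆ E
      intro x hx
      rw [← hun]
      simp only [Finset.mem_union, Finset.mem_sdiff] at hx ⊢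
      tauto
    · show 2 * (A \ B).card = ((A \ B) ∪ (B \ A)).card
      rw [Finset.card_union_of_disjoint hdisj]
      omega
    · show PrefCond (A \ B) (((A \ B) ∪ (B \ A)) \ (A \ B))
      rw [hTU]
      intro t
      have dA : (A.filter (· ≤ t)).card
          = ((A \ B).filter (· ≤ t)).card + ((A ∩ B).filter (· ≤ t)).card := by
        rw [← Finset.card_union_of_disjoint (Finset.disjoint_filter_filter
          (disjoint_sdiff_inter A B)), ← Finset.filter_union, Finset.sdiff_union_inter]
      have dB : (B.filter (· ≤ t)).card
          = ((B \ A).filter (· ≤ t)).card + ((A ∩ B).filter (· ≤ t)).card := by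
        rw [Finset.inter_comm A B, ← Finset.card_union_of_disjoint
          (Finset.disjoint_filter_filter (disjoint_sdiff_inter B A)),
          ← Finset.filter_union, Finset.sdiff_union_inter]
      have := hpc t
      omega
  · -- backward maps-to
    rintro ⟨T, U⟩ hx
    rw [Finset.mem_coe, Finset.mem_sigma, Finset.mem_powerset] at hx
    obtain ⟨hTE, hU⟩ := hx
    rw [mem_splits] at hU
    obtain ⟨hUT, hcard, hpc⟩ := hU
    simp only at hTE hUT hcard hpc
    have hUE : U ⊆ E := hUT.trans hTE
    show (E \ (T \ U), E \ U) ∈ pairsFin E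
    rw [mem_pairsFin]
    have eA : E \ (T \ U) = (E \ T) ∪ U := by
      ext x
      simp only [Finset.mem_sdiff, Finset.mem_union]
      constructor
      · rintro ⟨hxE, hx⟩
        by_cases h : x ∈ T
        · right
          by_contra hc
          exact hx ⟨h, hc⟩
        · exact Or.inl ⟨hxE, h⟩
      · rintro (⟨hxE, hxT⟩ | hxU)
        · exact ⟨hxE, fun hc => hxT hc.1⟩
        · exact ⟨hUE hxU, fun hc => hc.2 hxU⟩
    have eB : E \ U = (E \ T) ∪ (T \ U) := by
      ext x
      simp only [Finset.mem_sdiff, Finset.mem_union]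
      constructor
      · rintro ⟨hxE, hx⟩
        by_cases h : x ∈ T
        · exact Or.inr ⟨h, hx⟩
        · exact Or.inl ⟨hxE, h⟩
      · rintro (⟨hxE, hxT⟩ | ⟨hxT, hxU⟩)
        · exact ⟨hxE, fun hc => hxT (hUT hc)⟩
        · exact ⟨hTE hxT, hxU⟩
    have d1 : Disjoint (E \ T) U :=
      Finset.disjoint_left.2 (fun x hx hc => (Finset.mem_sdiff.1 hx).2 (hUT hc))
    have d2 : Disjoint (E \ T) (T \ U) :=
      Finset.disjoint_left.2 (fun x hx hc => (Finset.mem_sdiff.1 hx).2 (Finset.mem_sdiff.1 hc).1)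
    refine ⟨Finset.sdiff_subset, Finset.sdiff_subset, ?_, ?_, ?_⟩
    · show E \ (T \ U) ∪ E \ U = E
      apply Finset.Subset.antisymm
      · intro x hx
        rcases Finset.mem_union.1 hx with h | h
        · exact (Finset.mem_sdiff.1 h).1
        · exact (Finset.mem_sdiff.1 h).1
      · intro x hx
        by_cases h : x ∈ U
        · exact Finset.mem_union_left _ (Finset.mem_sdiff.2 ⟨hx, fun hc =>
            (Finset.mem_sdiff.1 hc).2 h⟩)
        · exact Finset.mem_union_right _ (Finset.mem_sdiff.2 ⟨hx, h⟩)
    · show (E \ (T \ U)).card = (E \ U).card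
      rw [eA, eB, Finset.card_union_of_disjoint d1, Finset.card_union_of_disjoint d2,
        Finset.card_sdiff_of_subset hUT]
      omega
    · show PrefCond (E \ (T \ U)) (E \ U)
      rw [eA, eB]
      intro t
      have dA : (((E \ T) ∪ U).filter (· ≤ t)).card
          = ((E \ T).filter (· ≤ t)).card + (U.filter (· ≤ t)).card := by
        rw [Finset.filter_union, Finset.card_union_of_disjoint
          (Finset.disjoint_filter_filter d1)]
      have dB : (((E \ T) ∪ (T \ U)).filter (· ≤ t)).card
          = ((E \ T).filter (· ≤ t)).card + ((T \ U).filter (· ≤ t)).card := by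
        rw [Finset.filter_union, Finset.card_union_of_disjoint
          (Finset.disjoint_filter_filter d2)]
      have := hpc t
      omega
  · -- left inverse
    rintro ⟨A, B⟩ hq
    rw [Finset.mem_coe, mem_pairsFin] at hq
    obtain ⟨hA, hB, hun, hcard, hpc⟩ := hq
    dsimp only
    have e1 : ((A \ B) ∪ (B \ A)) \ (A \ B) = B \ A := by
      ext x
      simp only [Finset.mem_sdiff, Finset.mem_union]
      tauto
    rw [e1]
    have e2 : E \ (B \ A) = A := by
      ext x
      simp only [Finset.mem_sdiff]
      constructor
      · rintro ⟨hxE, hx⟩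
        rw [← hun] at hxE
        rcases Finset.mem_union.1 hxE with h | h
        · exact h
        · by_contra hc
          exact hx ⟨h, hc⟩
      · intro hx
        exact ⟨hA hx, fun hc => hc.2 hx⟩
    have e3 : E \ (A \ B) = B := by
      ext x
      simp only [Finset.mem_sdiff]
      constructor
      · rintro ⟨hxE, hx⟩
        rw [← hun] at hxE
        rcases Finset.mem_union.1 hxE with h | h
        · by_contra hc
          exact hx ⟨h, hc⟩
        · exact h
      · intro hx
        exact ⟨hB hx, fun hc => hc.2 hx⟩
    rw [e2, e3]
  · -- right inverse
    rintro ⟨T, U⟩ hx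
    rw [Finset.mem_coe, Finset.mem_sigma, Finset.mem_powerset] at hx
    obtain ⟨hTE, hU⟩ := hx
    rw [mem_splits] at hU
    obtain ⟨hUT, hcard, hpc⟩ := hU
    have hUE : U ⊆ E := hUT.trans hTE
    dsimp only
    have e1 : (E \ (T \ U)) \ (E \ U) = U := by
      ext x
      have hx1 : x ∈ U → x ∈ E := fun h => hUE h
      have hx2 : x ∈ U → x ∈ T := fun h => hUT h
      simp only [Finset.mem_sdiff]
      tauto
    have e2 : (E \ U) \ (E \ (T \ U)) = T \ U := by
      ext x
      have hx1 : x ∈ T → x ∈ E := fun h => hTE h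
      simp only [Finset.mem_sdiff]
      tauto
    have e3 : U ∪ (T \ U) = T := Finset.union_sdiff_of_subset hUT
    refine Sigma.ext ?_ (heq_of_eq ?_)
    · show ((E \ (T \ U)) \ (E \ U)) ∪ ((E \ U) \ (E \ (T \ U))) = T
      rw [e1, e2, e3]
    · show (E \ (T \ U)) \ (E \ U) = U
      rw [e1]

lemma sum_splits_card (E : Finset ℕ) :
    ∑ T ∈ E.powerset, (splits T).card = motzkin E.card := by
  have h1 : ∀ T ∈ E.powerset, (splits T).card
      = (fun j => if Even j then catalan (j / 2) else 0) T.card :=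
    fun T _ => splits_card T
  rw [Finset.sum_congr rfl h1,
    Finset.sum_powerset_apply_card (f := fun j => if Even j then catalan (j / 2) else 0)]
  rw [motzkin]
  have h2 : ∀ j ∈ Finset.range (E.card + 1),
      E.card.choose j • (if Even j then catalan (j / 2) else 0)
      = if Even j then E.card.choose j * catalan (j / 2) else 0 := by
    intro j _
    split
    · rw [smul_eq_mul]
    · rw [smul_eq_mul, mul_zero]
  rw [Finset.sum_congr rfl h2, ← Finset.sum_filter]
  have h3 : ∀ r ∈ Finset.range (E.card + 1), E.card.choose (2 * r) * catalan r
      = if 2 * r ≤ E.card then E.card.choose (2 * r) * catalan r else 0 := by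
    intro r _
    split
    · rfl
    · rename_i h
      rw [Nat.choose_eq_zero_of_lt (by omega), zero_mul]
  rw [Finset.sum_congr rfl h3, ← Finset.sum_filter]
  refine (Finset.sum_nbij' (fun r => 2 * r) (fun j => j / 2) ?_ ?_ ?_ ?_ ?_).symm
  · intro r hr
    simp only [Finset.mem_filter, Finset.mem_range] at hr ⊢
    exact ⟨by omega, ⟨r, by omega⟩⟩
  · intro j hj
    simp only [Finset.mem_filter, Finset.mem_range] at hj ⊢
    obtain ⟨hj1, c, hc⟩ := hj
    exact ⟨by omega, by omega⟩
  · intro r _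
    show 2 * r / 2 = r
    omega
  · intro j hj
    simp only [Finset.mem_filter, Finset.mem_range] at hj
    obtain ⟨-, c, hc⟩ := hj
    show 2 * (j / 2) = j
    omega
  · intro r hr
    show _ = E.card.choose (2 * r) * catalan (2 * r / 2)
    have h2r : 2 * r / 2 = r := by omega
    rw [h2r]

end Count

/-- Theorem 5.1.  For `g = sl_{n+1}(ℂ)`:
(1) if `c` is an ad-nilpotent ideal with generator set
`Γ(c) = {(i₁,j₁),…,(i_k,j_k)}`, then
`n_g(c) = p({i₁,…,i_k} ∪ {j₁-1,…,j_k-1})`;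
(2) for `E ⊆ [n]`, the map `(a,b) ↦` (ideal with generators `{(a_i, b_i+1)}`) is a
bijection from the pairs of sequences as in `GoodPair` onto the set of ideals with
`n_g(c) = p(E)`;
(3) if `#E = s`, then the number of ad-nilpotent ideals with `n_g(c) = p(E)` equals
the Motzkin number `M_s`; in particular it depends only on `s = n - srk p(E)`. -/
theorem normalizers_of_ideals_in_sl (n : ℕ) :
    (∀ I G : Finset (ℕ × ℕ), IsUpperIdeal n I →
      (∀ p, p ∈ G ↔ IsGenerator I p) →
      NormalizerEq n I ((G.image Prod.fst) ∪ (G.image fun p => p.2 - 1))) ∧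
    (∀ E : Finset ℕ, E ⊆ Finset.Icc 1 n →
      Set.BijOn (idealOfPair n) {s | GoodPair n E s}
        {I : Finset (ℕ × ℕ) | IsUpperIdeal n I ∧ NormalizerEq n I E}) ∧
    (∀ E : Finset ℕ, E ⊆ Finset.Icc 1 n →
      {I : Finset (ℕ × ℕ) | IsUpperIdeal n I ∧ NormalizerEq n I E}.ncard =
        motzkin E.card) := by
  refine ⟨part1 n, fun E hE => part2 hE, fun E hE => ?_⟩
  have hbij := part2 (n := n) hE
  have h1 : {I : Finset (ℕ × ℕ) | IsUpperIdeal n I ∧ NormalizerEq n I E}.ncard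
      = {s | GoodPair n E s}.ncard := by
    rw [← hbij.image_eq]
    exact Set.ncard_image_of_injOn hbij.injOn
  have hbij2 := goodPair_pairs_bijOn hE
  have h2 : {s | GoodPair n E s}.ncard = (pairsFin E).card :=
    calc {s | GoodPair n E s}.ncard
        = (toPairs '' {s | GoodPair n E s}).ncard :=
          (Set.ncard_image_of_injOn hbij2.injOn).symm
      _ = (↑(pairsFin E) : Set (Finset ℕ × Finset ℕ)).ncard := by rw [hbij2.image_eq]
      _ = (pairsFin E).card := Set.ncard_coe_finset _
  rw [h1, h2, pairsFin_card_eq_sigma, Finset.card_sigma]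
  exact sum_splits_card E

end SLModel
end
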